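/- Let m ≥ 1 and let C be a binary self-orthogonal code of length N containing the all-ones vector 𝟏. Then cwe(C(m)) = Σ_D μ_m(D), where the sum is over all subcodes D of C with 𝟏 ∈ D (and where μ_m(D) = 0 whenever dim D > m+1). -/

import Mathlib

open Matrix MvPolynomial

noncomputable section

abbrev V (m : ℕ) : Type := Fin m → ZMod 2

/-- σ₁ = [[0,1],[1,0]] -/
def sigma1 : Matrix (ZMod 2) (ZMod 2) ℝ := fun v w => if v = w then 0 else 1

/-- σ₂ = [[1,0],[0,-1]] -/
def sigma2 : Matrix (ZMod 2) (ZMod 2) ℝ := fun v w =>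
  if v = w then (if v = 0 then 1 else -1) else 0

/-- The Kronecker product of `m` 2×2 matrices having `s` in factor `j` and the identity in
all other factors, with coordinates of `ℝ^{2^m}` indexed by `𝔽₂^m`. -/
def kronFactor (m : ℕ) (j : Fin m) (s : Matrix (ZMod 2) (ZMod 2) ℝ) :
    Matrix (V m) (V m) ℝ :=
  fun v w => ∏ i : Fin m, if i = j then s (v i) (w i) else (if v i = w i then 1 else 0)

/-- The extraspecial 2-group `E(m)` as a subgroup of the orthogonal group `O(2^m, ℝ)`. -/
def Egroup (m : ℕ) : Subgroup (Matrix.orthogonalGroup (V m) ℝ) :=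
  Subgroup.closure {g | ∃ j : Fin m,
    (g : Matrix (V m) (V m) ℝ) = kronFactor m j sigma1 ∨
    (g : Matrix (V m) (V m) ℝ) = kronFactor m j sigma2}

/-- The real Clifford group `𝒞_m`, the normalizer of `E(m)` in `O(2^m, ℝ)`. -/
def Clifford (m : ℕ) : Subgroup (Matrix.orthogonalGroup (V m) ℝ) :=
  Subgroup.normalizer ((Egroup m : Subgroup (Matrix.orthogonalGroup (V m) ℝ)) : Set (Matrix.orthogonalGroup (V m) ℝ))

/-- Action of a matrix on polynomials by linear substitution of the variables:
`x_f ↦ ∑ f', g f' f • x_{f'}`. -/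
def polyAct {σ R : Type*} [Fintype σ] [CommSemiring R] (g : Matrix σ σ R)
    (p : MvPolynomial σ R) : MvPolynomial σ R :=
  aeval (fun f => ∑ f' : σ, C (g f' f) * X f') p

/-- The dual of a linear code over `𝔽_p`. -/
def dualCode {p N : ℕ} (C : Submodule (ZMod p) (Fin N → ZMod p)) :
    Submodule (ZMod p) (Fin N → ZMod p) where
  carrier := {v | ∀ c ∈ C, ∑ j, v j * c j = 0}
  add_mem' := by
    intro a b ha hb c hc
    simp only [Set.mem_setOf_eq] at *
    simp [add_mul, Finset.sum_add_distrib, ha c hc, hb c hc]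
  zero_mem' := by
    intro c hc
    simp
  smul_mem' := by
    intro r a ha c hc
    simp only [Set.mem_setOf_eq] at *
    simp [smul_eq_mul, mul_assoc, ← Finset.mul_sum, ha c hc]

/-- `C(m) = C ⊗ 𝔽_{2^m}` : the `𝔽_{p^m}`-linear span of `C` inside `𝔽_{p^m}^N`, under the
identification of `𝔽_{p^m}` with `𝔽_p^m` given by a fixed basis; a word belongs to it iff
it is of the form `j ↦ (rows i j)_i` with all rows in `C`. -/
def codeExt (p m N : ℕ) (C : Submodule (ZMod p) (Fin N → ZMod p)) :
    Set (Fin N → (Fin m → ZMod p)) :=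
  {w | ∃ rows : Fin m → (Fin N → ZMod p), (∀ i, rows i ∈ C) ∧ ∀ j i, w j i = rows i j}

open scoped Classical in
/-- The complete weight enumerator of `C(m)`. -/
def cwe (m N : ℕ) (C : Submodule (ZMod 2) (Fin N → ZMod 2)) : MvPolynomial (V m) ℝ :=
  ∑ w : Fin N → V m, if w ∈ codeExt 2 m N C then ∏ j, X (w j) else 0

/-- The monomial `μ_M = ∏_j x_{M_j}` attached to an `m × N` matrix over `𝔽₂`. -/
def muM (m N : ℕ) (M : Fin m → Fin N → ZMod 2) : MvPolynomial (V m) ℝ :=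
  ∏ j : Fin N, X (fun i => M i j)

open scoped Classical in
/-- `μ_m(D) = ∑_M μ_M`, summed over the `m × N` matrices `M` over `𝔽₂` such that the span of
the rows of `M` together with the all-ones vector equals `D`.  (It is `0` if `𝟏 ∉ D` or
`dim D > m + 1`, since then no such matrix exists.) -/
def muCode (m N : ℕ) (D : Submodule (ZMod 2) (Fin N → ZMod 2)) : MvPolynomial (V m) ℝ :=
  ∑ M : Fin m → Fin N → ZMod 2,
    if Submodule.span (ZMod 2) (Set.range M ∪ {fun _ => 1}) = D then muM m N M else 0

/-- for a binary self-orthogonal code `C` containing `𝟏`,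
`cwe(C(m)) = ∑_{𝟏 ∈ D ⊆ C} μ_m(D)`. -/
theorem cwe_eq_sum_muCode (m N : ℕ) (hm : 0 < m)
    (C : Submodule (ZMod 2) (Fin N → ZMod 2)) (hso : C ≤ dualCode C)
    (h1 : (fun _ => (1 : ZMod 2)) ∈ C) :
    cwe m N C = ∑ᶠ D ∈ {D : Submodule (ZMod 2) (Fin N → ZMod 2) |
        D ≤ C ∧ (fun _ => (1 : ZMod 2)) ∈ D}, muCode m N D := by
  classical
  have hF : Finite (Submodule (ZMod 2) (Fin N → ZMod 2)) :=
    Finite.of_injective (fun D => (D : Set (Fin N → ZMod 2))) SetLike.coe_injective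
  have hfin : {D : Submodule (ZMod 2) (Fin N → ZMod 2) |
      D ≤ C ∧ (fun _ => (1 : ZMod 2)) ∈ D}.Finite := Set.toFinite _
  rw [finsum_mem_eq_finite_toFinset_sum _ hfin]
  unfold muCode
  rw [Finset.sum_comm]
  have key : ∀ M : Fin m → Fin N → ZMod 2,
      (∑ D ∈ hfin.toFinset,
        if Submodule.span (ZMod 2) (Set.range M ∪ {fun _ => 1}) = D then muM m N M else 0)
      = if (∀ i, M i ∈ C) then muM m N M else 0 := by
    intro M
    rw [Finset.sum_ite_eq]
    congr 1
    rw [Set.Finite.mem_toFinset]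
    simp only [Set.mem_setOf_eq, Submodule.span_le, Set.union_subset_iff,
      Set.range_subset_iff, Set.singleton_subset_iff, SetLike.mem_coe]
    rw [eq_iff_iff]
    constructor
    · rintro ⟨⟨h, -⟩, -⟩; exact h
    · intro h
      refine ⟨⟨h, h1⟩, Submodule.subset_span ?_⟩
      exact Set.mem_union_right _ rfl
  simp only [key]
  unfold cwe
  refine Fintype.sum_equiv ⟨fun (w : Fin N → V m) i j => w j i,
    fun M j i => M i j, fun _ => rfl, fun _ => rfl⟩ _ _ ?_
  intro w
  simp only [Equiv.coe_fn_mk]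
  have hmem : w ∈ codeExt 2 m N C ↔ ∀ i, (fun j => w j i) ∈ C := by
    constructor
    · rintro ⟨rows, hr, hw⟩ i
      have : (fun j => w j i) = rows i := funext fun j => hw j i
      rw [this]; exact hr i
    · intro h
      exact ⟨fun i j => w j i, h, fun _ _ => rfl⟩
  have hprod : (∏ j, (X (w j) : MvPolynomial (V m) ℝ)) = muM m N (fun i j => w j i) := by
    unfold muM; rfl
  rw [hprod]
  by_cases h : w ∈ codeExt 2 m N C
  · rw [if_pos h, if_pos (hmem.mp h)]
  · rw [if_neg h, if_neg (fun hc => h (hmem.mpr hc))]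

end
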